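/- Let M ≥ 2 and n₁,…,n_M ≥ 2 be integers, Q = ∏_{i=1}^M n_i − ∑_{i=1}^M n_i + M − 1, and let (c_I)_{I⊆{1,…,M}} be the equal-prevalence correlation family: c_I = (M − 1 − ∑_{i∈I} n_i)/Q for every proper subset I ⊊ {1,…,M}, and c_{{1,…,M}} = 1. For J ⊆ {1,…,M} let λ_J = ∑_{I⊆{1,…,M}} (−1)^{|Iᶜ∩Jᶜ|} c_I ∏_{k∈J∩Iᶜ} (n_k − 1). Then λ_J = (∏_{i=1}^M n_i)/Q whenever |J| < M − 1, and λ_J = 0 whenever |J| ≥ M − 1. Consequently, the largest eigenvalue of the S×S matrix with entries c_{I(z,z′)} (S = ∏_j {1,…,n_j}, I(z,z′) the agreement set) equals λ_max = (∏_{i=1}^M n_i)/(∏_{i=1}^M n_i − ∑_{i=1}^M n_i + M − 1). -/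

import Mathlib

open Finset

lemma aux_sum_card_le_prod {ι : Type*} (s : Finset ι) (n : ι → ℕ) (hn : ∀ i, 2 ≤ n i) :
    (∑ i ∈ s, (n i - 1)) + s.card ≤ ∏ i ∈ s, n i := by
  classical
  induction s using Finset.cons_induction with
  | empty => simp
  | cons a t ha ih =>
    have h2 := hn a
    rw [Finset.sum_cons, Finset.prod_cons, Finset.card_cons]
    rcases t.eq_empty_or_nonempty with rfl | ⟨b, hb⟩
    · simp; omega
    · have hp : 2 ≤ ∏ i ∈ t, n i :=
        le_trans (hn b) (Finset.single_le_prod' (fun i _ => by have := hn i; omega) hb)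
      have h1 : n a + ∏ i ∈ t, n i ≤ n a * ∏ i ∈ t, n i := by nlinarith
      omega

lemma aux_sum_prod {ι : Type*} [Fintype ι] [DecidableEq ι] (w : ι → ℝ) :
    ∑ t : Finset ι, ∏ a ∈ t, w a = ∏ a, (w a + 1) := by
  rw [Fintype.prod_add]; simp

lemma aux_sum_prod_mem {ι : Type*} [Fintype ι] [DecidableEq ι] (w : ι → ℝ) (i : ι) :
    ∑ t : Finset ι, (if i ∈ t then ∏ a ∈ t, w a else 0)
      = w i * ∏ a ∈ Finset.univ.erase i, (w a + 1) := by
  classical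
  have hstep : ∀ t : Finset ι, (if i ∈ t then ∏ a ∈ t, w a else 0)
      = ∏ a ∈ t, w a - ∏ a ∈ t, (if a = i then 0 else w a) := by
    intro t
    by_cases h : i ∈ t
    · have h0 : (∏ a ∈ t, (if a = i then (0:ℝ) else w a)) = 0 :=
        Finset.prod_eq_zero h (by rw [if_pos rfl])
      rw [if_pos h, h0, sub_zero]
    · have h0 : (∏ a ∈ t, (if a = i then (0:ℝ) else w a)) = ∏ a ∈ t, w a :=
        Finset.prod_congr rfl (fun a ha => by
          have : a ≠ i := fun he => h (he ▸ ha)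
          rw [if_neg this])
      rw [if_neg h, h0, sub_self]
  rw [Finset.sum_congr rfl (fun t _ => hstep t), Finset.sum_sub_distrib,
    aux_sum_prod, aux_sum_prod]
  have h1 : (∏ a, ((if a = i then (0:ℝ) else w a) + 1))
      = 1 * ∏ a ∈ Finset.univ.erase i, (w a + 1) := by
    rw [← Finset.mul_prod_erase Finset.univ (fun a => (if a = i then (0:ℝ) else w a) + 1)
      (Finset.mem_univ i), if_pos rfl]
    norm_num
    exact Finset.prod_congr rfl (fun a ha => by rw [if_neg (Finset.ne_of_mem_erase ha)])
  have h2 : (∏ a, (w a + 1)) = (w i + 1) * ∏ a ∈ Finset.univ.erase i, (w a + 1) :=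
    (Finset.mul_prod_erase Finset.univ (fun a => w a + 1) (Finset.mem_univ i)).symm
  rw [h1, h2]; ring

lemma aux_prod_w {ι : Type*} [Fintype ι] [DecidableEq ι] (J K : Finset ι) (x : ι → ℝ) :
    ∏ k ∈ K, (if k ∈ J then x k else (-1 : ℝ))
      = (-1 : ℝ) ^ ((K ∩ Jᶜ).card) * ∏ k ∈ J ∩ K, x k := by
  rw [← Finset.prod_filter_mul_prod_filter_not K (· ∈ J)]
  have h1 : K.filter (· ∈ J) = J ∩ K := by
    rw [Finset.filter_mem_eq_inter, Finset.inter_comm]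
  have h2 : K.filter (fun k => ¬ k ∈ J) = K ∩ Jᶜ := by
    ext a; simp [Finset.mem_filter, Finset.mem_compl]
  have e1 : (∏ k ∈ K.filter (· ∈ J), (if k ∈ J then x k else (-1:ℝ))) = ∏ k ∈ J ∩ K, x k := by
    rw [h1]; exact Finset.prod_congr rfl (fun a ha => if_pos (Finset.mem_of_mem_inter_left ha))
  have e2 : (∏ k ∈ K.filter (fun k => ¬ k ∈ J), (if k ∈ J then x k else (-1:ℝ)))
      = (-1:ℝ) ^ ((K ∩ Jᶜ).card) := by
    rw [Finset.prod_congr h2 (fun a ha =>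
      if_neg (Finset.mem_compl.mp (Finset.mem_of_mem_inter_right ha))), Finset.prod_const]
  rw [e1, e2]; ring

lemma lam_key {M : ℕ} (n : Fin M → ℕ) (J : Finset (Fin M)) (Q P S : ℝ)
    (c : Finset (Fin M) → ℝ)
    (hqc : ∀ I : Finset (Fin M),
      Q * c I = ((M:ℝ) - 1 - ∑ i ∈ I, (n i : ℝ)) + (if I = Finset.univ then P else 0))
    (hS : S = ∑ i, (n i : ℝ)) (w : Fin M → ℝ)
    (hw : ∀ k, w k = if k ∈ J then (n k : ℝ) - 1 else -1) :
    Q * (∑ I : Finset (Fin M), (-1:ℝ)^((Iᶜ ∩ Jᶜ).card) * c I * ∏ k ∈ J ∩ Iᶜ, ((n k:ℝ)-1))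
    = P + (((M:ℝ) - 1 - S) * ∏ k, (w k + 1)
        + ∑ i, (n i : ℝ) * w i * ∏ k ∈ Finset.univ.erase i, (w k + 1)) := by
  classical
  have step1 : Q * (∑ I : Finset (Fin M), (-1:ℝ)^((Iᶜ ∩ Jᶜ).card) * c I * ∏ k ∈ J ∩ Iᶜ, ((n k:ℝ)-1))
      = (∑ I : Finset (Fin M),
          (-1:ℝ)^((Iᶜ ∩ Jᶜ).card) * ((M:ℝ) - 1 - ∑ i ∈ I, (n i : ℝ)) * ∏ k ∈ J ∩ Iᶜ, ((n k:ℝ)-1))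
        + ∑ I : Finset (Fin M),
          (if I = Finset.univ then P else 0) * ((-1:ℝ)^((Iᶜ ∩ Jᶜ).card) * ∏ k ∈ J ∩ Iᶜ, ((n k:ℝ)-1)) := by
    rw [Finset.mul_sum, ← Finset.sum_add_distrib]
    refine Finset.sum_congr rfl (fun I _ => ?_)
    have : Q * ((-1:ℝ)^((Iᶜ ∩ Jᶜ).card) * c I * ∏ k ∈ J ∩ Iᶜ, ((n k:ℝ)-1))
        = (Q * c I) * ((-1:ℝ)^((Iᶜ ∩ Jᶜ).card) * ∏ k ∈ J ∩ Iᶜ, ((n k:ℝ)-1)) := by ring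
    rw [this, hqc I]; ring
  rw [step1]
  have step2 : (∑ I : Finset (Fin M),
      (if I = Finset.univ then P else 0) * ((-1:ℝ)^((Iᶜ ∩ Jᶜ).card) * ∏ k ∈ J ∩ Iᶜ, ((n k:ℝ)-1))) = P := by
    rw [Finset.sum_eq_single Finset.univ
      (fun I _ hne => by rw [if_neg hne, zero_mul])
      (fun h => absurd (Finset.mem_univ _) h)]
    simp
  rw [step2]
  have step3 : (∑ I : Finset (Fin M),
      (-1:ℝ)^((Iᶜ ∩ Jᶜ).card) * ((M:ℝ) - 1 - ∑ i ∈ I, (n i : ℝ)) * ∏ k ∈ J ∩ Iᶜ, ((n k:ℝ)-1))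
      = ∑ K : Finset (Fin M), (((M:ℝ) - 1 - S) + ∑ i ∈ K, (n i : ℝ)) * ∏ k ∈ K, w k := by
    refine Fintype.sum_bijective compl (Function.Involutive.bijective compl_compl)
      _ _ (fun I => ?_)
    have hsum : ∑ i ∈ I, (n i : ℝ) = S - ∑ i ∈ Iᶜ, (n i : ℝ) := by
      rw [hS, ← Finset.sum_compl_add_sum I (fun i => (n i : ℝ))]; ring
    have hprod : ∏ k ∈ Iᶜ, w k = (-1:ℝ)^((Iᶜ ∩ Jᶜ).card) * ∏ k ∈ J ∩ Iᶜ, ((n k:ℝ)-1) := by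
      rw [← aux_prod_w J Iᶜ (fun k => (n k:ℝ)-1)]
      exact Finset.prod_congr rfl (fun k _ => hw k)
    rw [hsum, hprod]
    have hsq : (-1:ℝ)^((Iᶜ ∩ Jᶜ).card) * (-1:ℝ)^((Iᶜ ∩ Jᶜ).card) = 1 := by
      rw [← pow_add]; exact Even.neg_one_pow ⟨(Iᶜ ∩ Jᶜ).card, rfl⟩
    nlinarith [hsq]
  rw [step3]
  have step4 : (∑ K : Finset (Fin M), (((M:ℝ) - 1 - S) + ∑ i ∈ K, (n i : ℝ)) * ∏ k ∈ K, w k)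
      = ((M:ℝ) - 1 - S) * ∏ k, (w k + 1)
        + ∑ i, (n i : ℝ) * w i * ∏ k ∈ Finset.univ.erase i, (w k + 1) := by
    have expand : ∀ K : Finset (Fin M),
        (((M:ℝ) - 1 - S) + ∑ i ∈ K, (n i : ℝ)) * ∏ k ∈ K, w k
        = ((M:ℝ) - 1 - S) * ∏ k ∈ K, w k
          + ∑ i : Fin M, (if i ∈ K then (n i:ℝ) * ∏ k ∈ K, w k else 0) := by
      intro K
      have : (∑ i : Fin M, (if i ∈ K then (n i:ℝ) * ∏ k ∈ K, w k else 0))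
          = (∑ i ∈ K, (n i : ℝ)) * ∏ k ∈ K, w k := by
        rw [Finset.sum_ite_mem, Finset.univ_inter, Finset.sum_mul]
      rw [this]; ring
    rw [Finset.sum_congr rfl (fun K _ => expand K), Finset.sum_add_distrib,
      ← Finset.mul_sum, aux_sum_prod, Finset.sum_comm]
    congr 1
    refine Finset.sum_congr rfl (fun i _ => ?_)
    have : (∑ K : Finset (Fin M), (if i ∈ K then (n i:ℝ) * ∏ k ∈ K, w k else 0))
        = (n i : ℝ) * ∑ K : Finset (Fin M), (if i ∈ K then ∏ k ∈ K, w k else 0) := by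
      rw [Finset.mul_sum]
      exact Finset.sum_congr rfl (fun K _ => by split_ifs <;> simp)
    rw [this, aux_sum_prod_mem]; ring
  rw [step4]; ring

lemma aux_prod_sum_zero {M : ℕ} (n : Fin M → ℕ) (F : ∀ j, Fin (n j) → ℝ) (j0 : Fin M)
    (h0 : ∑ x, F j0 x = 0) : ∑ z : ∀ j, Fin (n j), ∏ j, F j (z j) = 0 := by
  rw [← Fintype.prod_sum F]
  exact Finset.prod_eq_zero (Finset.mem_univ j0) h0

lemma aux_h_sum (m : ℕ) (hm : 2 ≤ m) :
    ∑ x : Fin m, (if (x:ℕ) = 0 then (1:ℝ) else if (x:ℕ) = 1 then -1 else 0) = 0 := by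
  rw [Fin.sum_univ_eq_sum_range (fun k => if k = 0 then (1:ℝ) else if k = 1 then -1 else 0) m]
  have hsplit : ∀ k : ℕ, (if k = 0 then (1:ℝ) else if k = 1 then -1 else 0)
      = (if k = 0 then (1:ℝ) else 0) + (if k = 1 then (-1:ℝ) else 0) := by
    intro k
    rcases k with _ | _ | k <;> norm_num
  rw [Finset.sum_congr rfl (fun k _ => hsplit k), Finset.sum_add_distrib,
    Finset.sum_ite_eq' (Finset.range m) 0 (fun _ => (1:ℝ)),
    Finset.sum_ite_eq' (Finset.range m) 1 (fun _ => (-1:ℝ))]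
  rw [if_pos (Finset.mem_range.mpr (by omega)), if_pos (Finset.mem_range.mpr (by omega))]
  ring

noncomputable def auxh : ℕ → ℝ := fun k => if k = 0 then 1 else if k = 1 then -1 else 0

/-- **Lemma 1 of the paper.** For the equal-prevalence correlation family
`c_I = (M − 1 − ∑_{i∈I} n_i)/Q` (`I ⊊ {1,…,M}`, `c_{{1,…,M}} = 1`,
`Q = ∏ n_i − ∑ n_i + M − 1`), the eigenvalues
`λ_J = ∑_I (−1)^{|Iᶜ∩Jᶜ|} c_I ∏_{k∈J∩Iᶜ}(n_k − 1)` satisfy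
`λ_J = (∏ n_i)/Q` when `|J| < M − 1` and `λ_J = 0` when `|J| ≥ M − 1`;
consequently the largest eigenvalue of the factor-symmetric matrix with
entries `c_{I(z,z′)}` equals `(∏ n_i)/Q`. -/
theorem equal_prevalence_eigenvalues_and_max
    (M : ℕ) (hM : 2 ≤ M) (n : Fin M → ℕ) (hn : ∀ j, 2 ≤ n j)
    (Q : ℝ) (hQ : Q = (∏ i, (n i : ℝ)) - (∑ i, (n i : ℝ)) + M - 1)
    (c : Finset (Fin M) → ℝ)
    (hc : ∀ I : Finset (Fin M), I ≠ Finset.univ →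
      c I = ((M : ℝ) - 1 - ∑ i ∈ I, (n i : ℝ)) / Q)
    (hcuniv : c Finset.univ = 1)
    (lam : Finset (Fin M) → ℝ)
    (hlam : ∀ J : Finset (Fin M),
      lam J = ∑ I : Finset (Fin M),
        (-1 : ℝ) ^ (Iᶜ ∩ Jᶜ).card * c I * ∏ k ∈ J ∩ Iᶜ, ((n k : ℝ) - 1))
    (A : Matrix (∀ j, Fin (n j)) (∀ j, Fin (n j)) ℝ)
    (hA : ∀ z z' : ∀ j, Fin (n j),
      A z z' = c (Finset.univ.filter fun j => z j = z' j)) :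
    (∀ J : Finset (Fin M), J.card < M - 1 → lam J = (∏ i, (n i : ℝ)) / Q) ∧
    (∀ J : Finset (Fin M), M - 1 ≤ J.card → lam J = 0) ∧
    (∃ v : (∀ j, Fin (n j)) → ℝ, v ≠ 0 ∧
      A.mulVec v = ((∏ i, (n i : ℝ)) / Q) • v) ∧
    (∀ (t : ℝ) (v : (∀ j, Fin (n j)) → ℝ), v ≠ 0 → A.mulVec v = t • v →
      t ≤ (∏ i, (n i : ℝ)) / Q) := by
  classical
  set P : ℝ := ∏ i, (n i : ℝ) with hP
  set S : ℝ := ∑ i, (n i : ℝ) with hS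
  -- positivity of Q
  have hSleP : S ≤ P := by
    have hnat := aux_sum_card_le_prod Finset.univ n hn
    rw [Finset.card_univ, Fintype.card_fin] at hnat
    have hcast : ((∑ i, (n i - 1) : ℕ) : ℝ) = S - M := by
      rw [Nat.cast_sum,
        Finset.sum_congr rfl (fun (i : Fin M) _ =>
          (by rw [Nat.cast_sub (by have := hn i; omega)]; norm_num :
            ((n i - 1 : ℕ) : ℝ) = (n i : ℝ) - 1)),
        Finset.sum_sub_distrib, Finset.sum_const, Finset.card_univ, Fintype.card_fin,
        nsmul_eq_mul, mul_one, hS]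
    have : ((∑ i, (n i - 1) : ℕ) : ℝ) + M ≤ P := by
      rw [hP, ← Nat.cast_prod]
      exact_mod_cast hnat
    linarith [hcast ▸ this]
  have hM1 : (2:ℝ) ≤ (M:ℝ) := by exact_mod_cast hM
  have hQpos : 0 < Q := by rw [hQ]; linarith
  have hQne : Q ≠ 0 := ne_of_gt hQpos
  -- Q * c I
  have hqc : ∀ I : Finset (Fin M),
      Q * c I = ((M:ℝ) - 1 - ∑ i ∈ I, (n i : ℝ)) + (if I = Finset.univ then P else 0) := by
    intro I
    by_cases hI : I = Finset.univ
    · subst hI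
      rw [hcuniv, if_pos rfl, mul_one, hQ]; ring
    · rw [hc I hI, if_neg hI, add_zero, mul_div_cancel₀ _ hQne]
  -- the weight functions
  set w : Finset (Fin M) → Fin M → ℝ :=
    fun J k => if k ∈ J then (n k : ℝ) - 1 else -1 with hwdef
  have hkey : ∀ J : Finset (Fin M), Q * lam J
      = P + (((M:ℝ) - 1 - S) * ∏ k, (w J k + 1)
        + ∑ i, (n i : ℝ) * w J i * ∏ k ∈ Finset.univ.erase i, (w J k + 1)) := by
    intro J
    rw [hlam J]
    exact lam_key n J Q P S c hqc hS (w J) (fun k => rfl)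
  have hw1 : ∀ (J : Finset (Fin M)) (k : Fin M), k ∈ J → w J k + 1 = (n k : ℝ) := by
    intro J k hk; rw [hwdef]; simp [hk]
  have hw0 : ∀ (J : Finset (Fin M)) (k : Fin M), k ∉ J → w J k + 1 = 0 := by
    intro J k hk; rw [hwdef]; simp [hk]
  -- Part 1
  have part1 : ∀ J : Finset (Fin M), J.card < M - 1 → lam J = P / Q := by
    intro J hJ
    have hcc : 2 ≤ Jᶜ.card := by
      rw [Finset.card_compl, Fintype.card_fin]; omega
    obtain ⟨a, ha, b, hb, hab⟩ := Finset.one_lt_card.mp (show 1 < Jᶜ.card by omega)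
    have haJ : a ∉ J := Finset.mem_compl.mp ha
    have hbJ : b ∉ J := Finset.mem_compl.mp hb
    have hPP : (∏ k, (w J k + 1)) = 0 :=
      Finset.prod_eq_zero (Finset.mem_univ a) (hw0 J a haJ)
    have hPPi : ∀ i : Fin M, (∏ k ∈ Finset.univ.erase i, (w J k + 1)) = 0 := by
      intro i
      rcases eq_or_ne i a with rfl | hia
      · exact Finset.prod_eq_zero
          (Finset.mem_erase.mpr ⟨hab.symm, Finset.mem_univ b⟩) (hw0 J b hbJ)
      · exact Finset.prod_eq_zero
          (Finset.mem_erase.mpr ⟨hia.symm, Finset.mem_univ a⟩) (hw0 J a haJ)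
    have := hkey J
    rw [hPP] at this
    rw [Finset.sum_congr rfl (fun i _ => by rw [hPPi i, mul_zero])] at this
    rw [Finset.sum_const, smul_zero] at this
    rw [eq_div_iff hQne]
    linarith
  -- Part 2
  have part2 : ∀ J : Finset (Fin M), M - 1 ≤ J.card → lam J = 0 := by
    intro J hJ
    have hmain : Q * lam J = 0 := by
      by_cases hJu : J = Finset.univ
      · subst hJu
        have hPP : (∏ k, (w Finset.univ k + 1)) = P :=
          Finset.prod_congr rfl (fun k _ => hw1 _ k (Finset.mem_univ k))
        have hterm : ∀ i : Fin M,
            (n i : ℝ) * w Finset.univ i * ∏ k ∈ Finset.univ.erase i, (w Finset.univ k + 1)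
            = ((n i : ℝ) - 1) * P := by
          intro i
          have he : (∏ k ∈ Finset.univ.erase i, (w Finset.univ k + 1))
              = ∏ k ∈ Finset.univ.erase i, (n k : ℝ) :=
            Finset.prod_congr rfl (fun k hk => hw1 _ k (Finset.mem_univ k))
          have hmul : (n i : ℝ) * ∏ k ∈ Finset.univ.erase i, (n k : ℝ) = P :=
            Finset.mul_prod_erase Finset.univ (fun k => (n k : ℝ)) (Finset.mem_univ i)
          have hwi : w Finset.univ i = (n i : ℝ) - 1 := by
            rw [hwdef]; simp
          rw [he, hwi]
          nlinarith [hmul]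
        have hsum2 : (∑ i, (n i : ℝ) * w Finset.univ i
              * ∏ k ∈ Finset.univ.erase i, (w Finset.univ k + 1))
            = (S - M) * P := by
          rw [Finset.sum_congr rfl (fun i _ => hterm i), ← Finset.sum_mul]
          congr 1
          rw [hS, Finset.sum_sub_distrib, Finset.sum_const, Finset.card_univ, Fintype.card_fin]
          simp
        rw [hkey Finset.univ, hPP, hsum2]; ring
      · -- card J = M - 1, complement is a singleton
        have hcard : J.card ≤ M := by simpa using Finset.card_le_univ J
        have hne : J.card ≠ M := fun h => hJu (Finset.card_eq_iff_eq_univ J |>.mp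
          (by rw [h, Fintype.card_fin]))
        have hcc : Jᶜ.card = 1 := by
          rw [Finset.card_compl, Fintype.card_fin]; omega
        obtain ⟨j, hj⟩ := Finset.card_eq_one.mp hcc
        have hjJ : j ∉ J := Finset.mem_compl.mp (hj ▸ Finset.mem_singleton_self j)
        have hkJ : ∀ k : Fin M, k ≠ j → k ∈ J := by
          intro k hk
          by_contra hkn
          have : k ∈ Jᶜ := Finset.mem_compl.mpr hkn
          rw [hj, Finset.mem_singleton] at this
          exact hk this
        have hPP : (∏ k, (w J k + 1)) = 0 :=
          Finset.prod_eq_zero (Finset.mem_univ j) (hw0 J j hjJ)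
        have hsum2 : (∑ i, (n i : ℝ) * w J i * ∏ k ∈ Finset.univ.erase i, (w J k + 1))
            = -P := by
          rw [Finset.sum_eq_single j (fun i _ hij => by
            rw [Finset.prod_eq_zero (Finset.mem_erase.mpr ⟨(Ne.symm hij), Finset.mem_univ j⟩)
              (hw0 J j hjJ), mul_zero])
            (fun h => absurd (Finset.mem_univ j) h)]
          have he : (∏ k ∈ Finset.univ.erase j, (w J k + 1))
              = ∏ k ∈ Finset.univ.erase j, (n k : ℝ) :=
            Finset.prod_congr rfl (fun k hk =>
              hw1 J k (hkJ k (Finset.ne_of_mem_erase hk)))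
          have hmul : (n j : ℝ) * ∏ k ∈ Finset.univ.erase j, (n k : ℝ) = P :=
            Finset.mul_prod_erase Finset.univ (fun k => (n k : ℝ)) (Finset.mem_univ j)
          have hwj : w J j = -1 := by rw [hwdef]; simp [hjJ]
          rw [he, hwj]
          nlinarith [hmul]
        rw [hkey J, hPP, hsum2]; ring
    rcases mul_eq_zero.mp hmain with h | h
    · exact absurd h hQne
    · exact h
  -- explicit form of A
  have hA' : ∀ z z' : ∀ j, Fin (n j),
      A z z' = ((M:ℝ) - 1 - ∑ j ∈ Finset.univ.filter (fun j => z j = z' j), (n j : ℝ)) / Q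
        + (if z = z' then P / Q else 0) := by
    intro z z'
    by_cases hzz : z = z'
    · subst hzz
      have hf : (Finset.univ.filter (fun j => z j = z j)) = Finset.univ := by simp
      rw [hA, hf, hcuniv, if_pos rfl, ← add_div, eq_comm, div_eq_one_iff_eq hQne, hQ,
        ← hS]
      ring
    · have hfne : (Finset.univ.filter (fun j => z j = z' j)) ≠ Finset.univ := by
        intro h
        apply hzz
        funext j
        have hj : j ∈ Finset.univ.filter (fun j => z j = z' j) := by
          rw [h]; exact Finset.mem_univ j
        exact (Finset.mem_filter.mp hj).2
      rw [hA, hc _ hfne, if_neg hzz, add_zero]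
  have hmv : ∀ (v : (∀ j, Fin (n j)) → ℝ) (z : ∀ j, Fin (n j)),
      (A.mulVec v) z = ∑ z', A z z' * v z' := by
    intro v z
    simp [Matrix.mulVec, dotProduct]
  refine ⟨part1, part2, ?_, ?_⟩
  · -- eigenvector
    set v : (∀ j, Fin (n j)) → ℝ := fun z => ∏ j, auxh ((z j : ℕ)) with hvdef
    have hsumh : ∀ j : Fin M, ∑ x : Fin (n j), auxh ((x : ℕ)) = 0 :=
      fun j => aux_h_sum (n j) (hn j)
    have hTA : (∑ z' : ∀ j, Fin (n j), v z') = 0 :=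
      aux_prod_sum_zero n (fun j x => auxh ((x : ℕ))) ⟨0, by omega⟩ (hsumh ⟨0, by omega⟩)
    have hTB : ∀ (z : ∀ j, Fin (n j)) (j : Fin M),
        (∑ z' : ∀ j, Fin (n j), (if z j = z' j then (1:ℝ) else 0) * v z') = 0 := by
      intro z j
      obtain ⟨k1, hk1⟩ : ∃ k1 : Fin M, k1 ≠ j := by
        rcases eq_or_ne j ⟨0, by omega⟩ with h | h
        · exact ⟨⟨1, by omega⟩, by rw [h]; exact Fin.ne_of_val_ne (by norm_num)⟩
        · exact ⟨⟨0, by omega⟩, Ne.symm h⟩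
      set F : ∀ k, Fin (n k) → ℝ := fun k x =>
        (if k = j then (if ((x : ℕ)) = ((z j : ℕ)) then 1 else 0) else 1) * auxh ((x : ℕ))
        with hF
      have hFz : ∀ z' : ∀ j, Fin (n j),
          (if z j = z' j then (1:ℝ) else 0) * v z' = ∏ k, F k (z' k) := by
        intro z'
        have h1 : (∏ k, F k (z' k))
            = (∏ k, (if k = j then (if ((z' k : ℕ)) = ((z j : ℕ)) then (1:ℝ) else 0) else 1))
              * ∏ k, auxh ((z' k : ℕ)) := Finset.prod_mul_distrib
        rw [h1, Finset.prod_ite_eq' Finset.univ j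
          (fun k => (if ((z' k : ℕ)) = ((z j : ℕ)) then (1:ℝ) else 0)),
          if_pos (Finset.mem_univ j)]
        congr 1
        by_cases hx : z j = z' j
        · rw [if_pos hx, if_pos (by rw [hx])]
        · rw [if_neg hx, if_neg (fun he => hx (Fin.ext he).symm)]
      rw [Finset.sum_congr rfl (fun z' _ => hFz z')]
      refine aux_prod_sum_zero n F k1 ?_
      have hFk1 : ∀ x : Fin (n k1), F k1 x = auxh ((x : ℕ)) := by
        intro x; rw [hF]; dsimp only; rw [if_neg hk1, one_mul]
      rw [Finset.sum_congr rfl (fun x _ => hFk1 x)]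
      exact hsumh k1
    have hmain : ∀ z : ∀ j, Fin (n j), (∑ z', A z z' * v z') = (P / Q) * v z := by
      intro z
      have expand : ∀ z' : ∀ j, Fin (n j), A z z' * v z'
          = (1/Q) * (((M:ℝ) - 1) * v z'
              - ∑ j, (if z j = z' j then (n j : ℝ) else 0) * v z')
            + (if z = z' then (P/Q) * v z' else 0) := by
        intro z'
        rw [hA' z z', Finset.sum_filter]
        have e2 : (∑ j, (if z j = z' j then (n j:ℝ) else 0) * v z')
            = (∑ j, (if z j = z' j then (n j:ℝ) else 0)) * v z' := (Finset.sum_mul _ _ _).symm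
        rw [e2]
        split_ifs <;> ring
      rw [Finset.sum_congr rfl (fun z' _ => expand z'), Finset.sum_add_distrib]
      have p2 : (∑ z' : ∀ j, Fin (n j), (if z = z' then (P/Q) * v z' else 0))
          = (P/Q) * v z := by
        rw [Finset.sum_ite_eq Finset.univ z (fun z' => (P/Q) * v z')]
        simp
      have p1 : (∑ z' : ∀ j, Fin (n j), (1/Q) * (((M:ℝ) - 1) * v z'
          - ∑ j, (if z j = z' j then (n j : ℝ) else 0) * v z')) = 0 := by
        rw [← Finset.mul_sum, Finset.sum_sub_distrib, ← Finset.mul_sum, hTA, mul_zero,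
          Finset.sum_comm]
        have hz : ∀ j : Fin M,
            (∑ z' : ∀ j, Fin (n j), (if z j = z' j then (n j:ℝ) else 0) * v z') = 0 := by
          intro j
          have hpt : ∀ z' : ∀ j, Fin (n j), (if z j = z' j then (n j:ℝ) else 0) * v z'
              = (n j : ℝ) * ((if z j = z' j then (1:ℝ) else 0) * v z') := by
            intro z'; split_ifs <;> ring
          rw [Finset.sum_congr rfl (fun z' _ => hpt z'), ← Finset.mul_sum, hTB z j, mul_zero]
        rw [Finset.sum_congr rfl (fun j _ => hz j), Finset.sum_const, smul_zero]
        ring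
      rw [p1, p2, zero_add]
    refine ⟨v, ?_, ?_⟩
    · intro hv0
      have h1 : v (fun j => ⟨0, by have := hn j; omega⟩) = 1 := by
        rw [hvdef]
        exact Finset.prod_eq_one (fun j _ => by simp [auxh])
      rw [hv0] at h1
      simp at h1
    · funext z
      rw [hmv v z, hmain z, Pi.smul_apply, smul_eq_mul]
  · -- maximality
    intro t v hv hev
    have pointv : ∀ z z' : ∀ j, Fin (n j), v z * (A z z' * v z')
        = (1/Q) * (((M:ℝ)-1) * (v z * v z')
            - ∑ j, (if z j = z' j then (n j:ℝ) else 0) * (v z * v z'))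
          + (if z = z' then (P/Q) * (v z * v z') else 0) := by
      intro z z'
      rw [hA' z z', Finset.sum_filter]
      have e : (∑ j, (if z j = z' j then (n j:ℝ) else 0) * (v z * v z'))
          = (∑ j, if z j = z' j then (n j:ℝ) else 0) * (v z * v z') :=
        (Finset.sum_mul _ _ _).symm
      rw [e]
      split_ifs <;> ring
    have key_inner : ∀ (j : Fin M) (z z' : ∀ j, Fin (n j)),
        (∑ x : Fin (n j), (if z j = x then v z else 0) * (if z' j = x then v z' else 0))
        = (if z j = z' j then v z * v z' else 0) := by
      intro j z z'
      rw [Finset.sum_eq_single (z j)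
        (fun x _ hx => by rw [if_neg (fun he => hx he.symm), zero_mul])
        (fun h => absurd (Finset.mem_univ _) h)]
      rw [if_pos rfl]
      by_cases h : z' j = z j
      · rw [if_pos h, if_pos h.symm]
      · rw [if_neg h, if_neg (fun e => h e.symm), mul_zero]
    have key_s : ∀ j : Fin M,
        (∑ x : Fin (n j), ∑ z, (if z j = x then v z else 0)) = ∑ z, v z := by
      intro j
      rw [Finset.sum_comm]
      refine Finset.sum_congr rfl (fun z _ => ?_)
      rw [Finset.sum_ite_eq Finset.univ (z j) (fun _ => v z)]
      simp
    have key_j : ∀ j : Fin M,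
        (∑ z : ∀ j, Fin (n j), ∑ z' : ∀ j, Fin (n j),
          (if z j = z' j then v z * v z' else 0))
        = ∑ x : Fin (n j), (∑ z, (if z j = x then v z else 0))^2 := by
      intro j
      rw [Finset.sum_congr rfl (fun z _ =>
        Finset.sum_congr rfl (fun z' _ => (key_inner j z z').symm))]
      rw [Finset.sum_congr rfl (fun z _ => Finset.sum_comm), Finset.sum_comm]
      refine Finset.sum_congr rfl (fun x _ => ?_)
      rw [sq, Finset.sum_mul_sum]
    have cheb : ∀ j : Fin M, (∑ z, v z)^2
        ≤ (n j : ℝ) * ∑ x : Fin (n j), (∑ z, (if z j = x then v z else 0))^2 := by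
      intro j
      have h := sq_sum_le_card_mul_sum_sq
        (s := (Finset.univ : Finset (Fin (n j))))
        (f := fun x => ∑ z, (if z j = x then v z else 0))
      rw [key_s j] at h
      simpa using h
    have hEz : ∀ z : ∀ j, Fin (n j), v z * (A.mulVec v) z
        = (1/Q) * (((M:ℝ)-1) * (v z * ∑ z', v z')
            - ∑ j, (n j:ℝ) * (∑ z', (if z j = z' j then v z * v z' else 0)))
          + (P/Q) * (v z)^2 := by
      intro z
      rw [hmv v z, Finset.mul_sum]
      rw [Finset.sum_congr rfl (fun z' _ => pointv z z'), Finset.sum_add_distrib,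
        ← Finset.mul_sum, Finset.sum_sub_distrib]
      have d : (∑ z', (if z = z' then (P/Q) * (v z * v z') else 0)) = (P/Q) * (v z)^2 := by
        rw [Finset.sum_ite_eq Finset.univ z (fun z' => (P/Q) * (v z * v z'))]
        simp only [Finset.mem_univ, if_true, sq]
      have e1 : (∑ z', ((M:ℝ)-1) * (v z * v z')) = ((M:ℝ)-1) * (v z * ∑ z', v z') := by
        calc (∑ z', ((M:ℝ)-1) * (v z * v z'))
            = ∑ z', (((M:ℝ)-1) * v z) * v z' :=
              Finset.sum_congr rfl (fun z' _ => by ring)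
          _ = (((M:ℝ)-1) * v z) * ∑ z', v z' := by rw [← Finset.mul_sum]
          _ = ((M:ℝ)-1) * (v z * ∑ z', v z') := by ring
      have e2 : (∑ z', ∑ j, (if z j = z' j then (n j:ℝ) else 0) * (v z * v z'))
          = ∑ j, (n j:ℝ) * (∑ z', (if z j = z' j then v z * v z' else 0)) := by
        rw [Finset.sum_comm]
        refine Finset.sum_congr rfl (fun j _ => ?_)
        rw [Finset.mul_sum]
        exact Finset.sum_congr rfl (fun z' _ => by split_ifs <;> ring)
      rw [d, e1, e2]
    have hE : (∑ z, v z * (A.mulVec v) z)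
        = (1/Q) * (((M:ℝ)-1) * (∑ z, v z)^2
            - ∑ j, (n j:ℝ) * (∑ z, ∑ z', (if z j = z' j then v z * v z' else 0)))
          + (P/Q) * ∑ z, (v z)^2 := by
      have f1 : (∑ z, ((M:ℝ)-1) * (v z * ∑ z', v z')) = ((M:ℝ)-1) * (∑ z, v z)^2 := by
        calc (∑ z, ((M:ℝ)-1) * (v z * ∑ z', v z'))
            = ∑ z, (((M:ℝ)-1) * (∑ z', v z')) * v z :=
              Finset.sum_congr rfl (fun z _ => by ring)
          _ = (((M:ℝ)-1) * (∑ z', v z')) * ∑ z, v z := by rw [← Finset.mul_sum]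
          _ = ((M:ℝ)-1) * (∑ z, v z)^2 := by ring
      have f2 : (∑ z, ∑ j, (n j:ℝ) * (∑ z', (if z j = z' j then v z * v z' else 0)))
          = ∑ j, (n j:ℝ) * (∑ z, ∑ z', (if z j = z' j then v z * v z' else 0)) := by
        rw [Finset.sum_comm]
        exact Finset.sum_congr rfl (fun j _ => by rw [Finset.mul_sum])
      have g1 : (∑ z, (1/Q) * (((M:ℝ)-1) * (v z * ∑ z', v z')
          - ∑ j, (n j:ℝ) * (∑ z', (if z j = z' j then v z * v z' else 0))))
          = (1/Q) * (((M:ℝ)-1) * (∑ z, v z)^2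
            - ∑ j, (n j:ℝ) * (∑ z, ∑ z', (if z j = z' j then v z * v z' else 0))) := by
        rw [← Finset.mul_sum, Finset.sum_sub_distrib, f1, f2]
      have g2 : (∑ z, (P/Q) * (v z)^2) = (P/Q) * ∑ z, (v z)^2 := (Finset.mul_sum _ _ _).symm
      rw [Finset.sum_congr rfl (fun z _ => hEz z), Finset.sum_add_distrib, g1, g2]
    have hEt : (∑ z, v z * (A.mulVec v) z) = t * ∑ z, (v z)^2 := by
      rw [hev, Finset.mul_sum]
      exact Finset.sum_congr rfl (fun z _ => by
        rw [Pi.smul_apply, smul_eq_mul]; ring)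
    have hpos : 0 < ∑ z, (v z)^2 := by
      obtain ⟨z1, hz1⟩ := Function.ne_iff.mp hv
      have hz1' : v z1 ≠ 0 := by simpa using hz1
      exact Finset.sum_pos' (fun z _ => sq_nonneg _)
        ⟨z1, Finset.mem_univ z1, by positivity⟩
    have hge : (M:ℝ) * (∑ z, v z)^2
        ≤ ∑ j, (n j:ℝ) * (∑ z, ∑ z', (if z j = z' j then v z * v z' else 0)) := by
      calc (M:ℝ) * (∑ z, v z)^2 = ∑ _j : Fin M, (∑ z, v z)^2 := by
            rw [Finset.sum_const, Finset.card_univ, Fintype.card_fin, nsmul_eq_mul]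
        _ ≤ _ := Finset.sum_le_sum (fun j _ => by rw [key_j j]; exact cheb j)
    have hX : (1/Q) * (((M:ℝ)-1) * (∑ z, v z)^2
        - ∑ j, (n j:ℝ) * (∑ z, ∑ z', (if z j = z' j then v z * v z' else 0))) ≤ 0 := by
      apply mul_nonpos_of_nonneg_of_nonpos
      · positivity
      · nlinarith [sq_nonneg (∑ z, v z)]
    have hfin : t * (∑ z, (v z)^2) ≤ (P/Q) * (∑ z, (v z)^2) := by
      rw [← hEt, hE]
      linarith
    exact (mul_le_mul_iff_of_pos_right hpos).mp hfin
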